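/- Let L > 0, T > 0, u₀ > 0, and let a : (0,L) → ℝ be measurable with 0 ≤ a(x) ≤ a₁ for all x. For all jointly measurable functions y, z : [0,T] × (0,L) → ℝ such that (t,x) ↦ y(t,x) − z(t,x) is square-integrable on [0,T] × (0,L) and y(t,·), z(t,·) are square-integrable on (0,L) for each t, one has ∫₀ᵀ ( ∫₀ᴸ ( sat₂(a·y(t,·))(x) − sat₂(a·z(t,·))(x) )² dx )^{1/2} dt ≤ 3 a₁ √T ( ∫₀ᵀ ∫₀ᴸ (y(t,x) − z(t,x))² dx dt )^{1/2}. -/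

import Mathlib

open MeasureTheory

/-- The `L²(0,L)` saturation operator: `sat₂(s)(x) = s(x)` if `‖s‖_{L²(0,L)} ≤ u₀`,
and `sat₂(s)(x) = u₀ s(x) / ‖s‖_{L²(0,L)}` otherwise. -/
noncomputable def sat2 (L u₀ : ℝ) (s : ℝ → ℝ) (x : ℝ) : ℝ :=
  if Real.sqrt (∫ y in Set.Ioo 0 L, s y ^ 2) ≤ u₀ then s x
  else u₀ * s x / Real.sqrt (∫ y in Set.Ioo 0 L, s y ^ 2)

variable {α : Type*} [MeasurableSpace α] {μ : Measure α}

lemma mul_int (f g : α → ℝ) (hfm : AEMeasurable f μ) (hgm : AEMeasurable g μ)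
    (hf : Integrable (fun x => f x ^ 2) μ) (hg : Integrable (fun x => g x ^ 2) μ) :
    Integrable (fun x => f x * g x) μ := by
  refine ((hf.add hg).div_const 2).mono' ((hfm.mul hgm).aestronglyMeasurable) ?_
  filter_upwards with x
  rw [Real.norm_eq_abs, abs_mul]
  simp only [Pi.add_apply]
  nlinarith [sq_nonneg (|f x| - |g x|), sq_abs (f x), sq_abs (g x), abs_nonneg (f x), abs_nonneg (g x)]

lemma cs_int (f g : α → ℝ) (hfm : AEMeasurable f μ) (hgm : AEMeasurable g μ)
    (hf : Integrable (fun x => f x ^ 2) μ) (hg : Integrable (fun x => g x ^ 2) μ) :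
    ∫ x, f x * g x ∂μ ≤ Real.sqrt (∫ x, f x ^ 2 ∂μ) * Real.sqrt (∫ x, g x ^ 2 ∂μ) := by
  have hfg := mul_int f g hfm hgm hf hg
  have h2 : (2:ℝ).HolderConjugate 2 := Real.holderConjugate_iff.mpr ⟨one_lt_two, by norm_num⟩
  have hfp : MemLp f (ENNReal.ofReal 2) μ := by
    rw [show ENNReal.ofReal 2 = 2 by norm_num,
      memLp_two_iff_integrable_sq hfm.aestronglyMeasurable]
    exact hf
  have hgp : MemLp g (ENNReal.ofReal 2) μ := by
    rw [show ENNReal.ofReal 2 = 2 by norm_num,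
      memLp_two_iff_integrable_sq hgm.aestronglyMeasurable]
    exact hg
  have key := integral_mul_norm_le_Lp_mul_Lq h2 hfp hgp
  have e1 : ∀ (h : α → ℝ), (fun a => ‖h a‖ ^ (2:ℝ)) = fun a => h a ^ 2 := by
    intro h; funext a
    rw [show (2:ℝ) = ((2:ℕ):ℝ) by norm_num, Real.rpow_natCast, Real.norm_eq_abs, sq_abs]
  rw [e1 f, e1 g] at key
  calc ∫ x, f x * g x ∂μ ≤ ∫ x, ‖f x * g x‖ ∂μ :=
        integral_mono hfg hfg.norm (fun x => le_abs_self _)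
    _ = ∫ x, ‖f x‖ * ‖g x‖ ∂μ := by simp [norm_mul]
    _ ≤ (∫ x, f x ^ 2 ∂μ) ^ (1/(2:ℝ)) * (∫ x, g x ^ 2 ∂μ) ^ (1/(2:ℝ)) := key
    _ = _ := by rw [Real.sqrt_eq_rpow, Real.sqrt_eq_rpow]

lemma N_add_le (f g : α → ℝ) (hfm : AEMeasurable f μ) (hgm : AEMeasurable g μ)
    (hf : Integrable (fun x => f x ^ 2) μ) (hg : Integrable (fun x => g x ^ 2) μ) :
    Real.sqrt (∫ x, (f x + g x) ^ 2 ∂μ) ≤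
      Real.sqrt (∫ x, f x ^ 2 ∂μ) + Real.sqrt (∫ x, g x ^ 2 ∂μ) := by
  have hfg := mul_int f g hfm hgm hf hg
  have expand : ∫ x, (f x + g x) ^ 2 ∂μ
      = (∫ x, f x ^ 2 ∂μ) + 2 * (∫ x, f x * g x ∂μ) + ∫ x, g x ^ 2 ∂μ := by
    have h0 : ∀ x, (f x + g x) ^ 2 = f x ^ 2 + 2 * (f x * g x) + g x ^ 2 := fun x => by ring
    have h1 : Integrable (fun x => f x ^ 2 + 2 * (f x * g x)) μ := by
      exact hf.add (hfg.const_mul 2)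
    rw [integral_congr_ae (Filter.Eventually.of_forall h0),
      integral_add h1 hg, integral_add hf (hfg.const_mul 2), integral_const_mul]
  have cs := cs_int f g hfm hgm hf hg
  have h1 : (0:ℝ) ≤ ∫ x, f x ^ 2 ∂μ := integral_nonneg fun x => sq_nonneg _
  have h2 : (0:ℝ) ≤ ∫ x, g x ^ 2 ∂μ := integral_nonneg fun x => sq_nonneg _
  calc Real.sqrt (∫ x, (f x + g x) ^ 2 ∂μ)
      ≤ Real.sqrt ((Real.sqrt (∫ x, f x ^ 2 ∂μ) + Real.sqrt (∫ x, g x ^ 2 ∂μ)) ^ 2) := by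
        apply Real.sqrt_le_sqrt
        have := Real.sq_sqrt h1
        have := Real.sq_sqrt h2
        nlinarith [Real.sqrt_nonneg (∫ x, f x ^ 2 ∂μ), Real.sqrt_nonneg (∫ x, g x ^ 2 ∂μ)]
    _ = _ := Real.sqrt_sq (by positivity)

lemma N_smul (c : ℝ) (f : α → ℝ) :
    Real.sqrt (∫ x, (c * f x) ^ 2 ∂μ) = |c| * Real.sqrt (∫ x, f x ^ 2 ∂μ) := by
  have h0 : ∀ x, (c * f x) ^ 2 = c ^ 2 * f x ^ 2 := fun x => by ring
  rw [integral_congr_ae (Filter.Eventually.of_forall h0), integral_const_mul,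
    Real.sqrt_mul (sq_nonneg c), Real.sqrt_sq_eq_abs]

lemma sat2_diff_le (L u₀ : ℝ) (hu₀ : 0 < u₀) (u v : ℝ → ℝ)
    (hum : AEMeasurable u (volume.restrict (Set.Ioo 0 L)))
    (hvm : AEMeasurable v (volume.restrict (Set.Ioo 0 L)))
    (hu2 : Integrable (fun x => u x ^ 2) (volume.restrict (Set.Ioo 0 L)))
    (hv2 : Integrable (fun x => v x ^ 2) (volume.restrict (Set.Ioo 0 L))) :
    Real.sqrt (∫ x in Set.Ioo 0 L, (sat2 L u₀ u x - sat2 L u₀ v x) ^ 2)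
      ≤ 2 * Real.sqrt (∫ x in Set.Ioo 0 L, (u x - v x) ^ 2) := by
  have huvm : AEMeasurable (fun x => u x - v x) (volume.restrict (Set.Ioo 0 L)) := hum.sub hvm
  have huv2 : Integrable (fun x => (u x - v x) ^ 2) (volume.restrict (Set.Ioo 0 L)) := by
    refine ((hu2.const_mul 2).add (hv2.const_mul 2)).mono'
      ((huvm.pow_const 2).aestronglyMeasurable) ?_
    filter_upwards with x
    rw [Real.norm_eq_abs, abs_of_nonneg (sq_nonneg _)]
    simp only [Pi.add_apply]
    nlinarith [sq_nonneg (u x + v x)]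
  simp only [sat2]
  set P := Real.sqrt (∫ x in Set.Ioo 0 L, u x ^ 2) with hPdef
  set Q := Real.sqrt (∫ x in Set.Ioo 0 L, v x ^ 2) with hQdef
  set D := Real.sqrt (∫ x in Set.Ioo 0 L, (u x - v x) ^ 2) with hDdef
  have hPn : 0 ≤ P := Real.sqrt_nonneg _
  have hQn : 0 ≤ Q := Real.sqrt_nonneg _
  have hDn : 0 ≤ D := Real.sqrt_nonneg _
  have tri1 : P ≤ Q + D := by
    have t := N_add_le v (fun x => u x - v x) hvm huvm hv2 huv2
    simp only [show ∀ x, (v x + (u x - v x)) ^ 2 = u x ^ 2 from fun x => by ring] at t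
    exact t
  have tri2 : Q ≤ P + D := by
    have huv2' : Integrable (fun x => (v x - u x) ^ 2) (volume.restrict (Set.Ioo 0 L)) := by
      have e : (fun x => (v x - u x) ^ 2) = fun x => (u x - v x) ^ 2 := funext fun x => by ring
      rw [e]; exact huv2
    have t := N_add_le u (fun x => v x - u x) hum (hvm.sub hum) hu2 huv2'
    simp only [show ∀ x, (u x + (v x - u x)) ^ 2 = v x ^ 2 from fun x => by ring,
      show ∀ x, (v x - u x) ^ 2 = (u x - v x) ^ 2 from fun x => by ring] at t
    exact t
  by_cases hP : P ≤ u₀ <;> by_cases hQ : Q ≤ u₀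
  · simp only [if_pos hP, if_pos hQ]
    linarith
  · -- P ≤ u₀ < Q
    have hQp : 0 < Q := lt_trans hu₀ (not_le.mp hQ)
    simp only [if_pos hP, if_neg hQ]
    have e : ∀ x, (u x - u₀ * v x / Q) ^ 2
        = ((u x - v x) + (1 - u₀ / Q) * v x) ^ 2 := by
      intro x; field_simp; ring
    rw [integral_congr_ae (Filter.Eventually.of_forall e)]
    have hg2 : Integrable (fun x => ((1 - u₀ / Q) * v x) ^ 2) (volume.restrict (Set.Ioo 0 L)) := by
      have e2 : (fun x => ((1 - u₀ / Q) * v x) ^ 2) = fun x => (1 - u₀ / Q) ^ 2 * v x ^ 2 :=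
        funext fun x => by ring
      rw [e2]; exact hv2.const_mul _
    have t := N_add_le (fun x => u x - v x) (fun x => (1 - u₀ / Q) * v x)
      huvm (hvm.const_mul _) huv2 hg2
    rw [N_smul] at t
    have hc : |1 - u₀ / Q| = 1 - u₀ / Q := abs_of_nonneg (by
      have : u₀ / Q ≤ 1 := (div_le_one hQp).mpr (le_of_lt (not_le.mp hQ))
      linarith)
    rw [hc] at t
    have hcq : (1 - u₀ / Q) * Q = Q - u₀ := by field_simp
    rw [hcq] at t
    linarith
  · -- Q ≤ u₀ < P
    have hPp : 0 < P := lt_trans hu₀ (not_le.mp hP)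
    simp only [if_neg hP, if_pos hQ]
    have e : ∀ x, (u₀ * u x / P - v x) ^ 2
        = ((u x - v x) + (u₀ / P - 1) * u x) ^ 2 := by
      intro x; field_simp; ring
    rw [integral_congr_ae (Filter.Eventually.of_forall e)]
    have hg2 : Integrable (fun x => ((u₀ / P - 1) * u x) ^ 2) (volume.restrict (Set.Ioo 0 L)) := by
      have e2 : (fun x => ((u₀ / P - 1) * u x) ^ 2) = fun x => (u₀ / P - 1) ^ 2 * u x ^ 2 :=
        funext fun x => by ring
      rw [e2]; exact hu2.const_mul _
    have t := N_add_le (fun x => u x - v x) (fun x => (u₀ / P - 1) * u x)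
      huvm (hum.const_mul _) huv2 hg2
    rw [N_smul] at t
    have hc : |u₀ / P - 1| = 1 - u₀ / P := by
      rw [abs_of_nonpos (by
        have : u₀ / P ≤ 1 := (div_le_one hPp).mpr (le_of_lt (not_le.mp hP))
        linarith)]
      ring
    rw [hc] at t
    have hcq : (1 - u₀ / P) * P = P - u₀ := by field_simp
    rw [hcq] at t
    linarith
  · -- u₀ < P, u₀ < Q
    have hPp : 0 < P := lt_trans hu₀ (not_le.mp hP)
    have hQp : 0 < Q := lt_trans hu₀ (not_le.mp hQ)
    simp only [if_neg hP, if_neg hQ]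
    have e : ∀ x, (u₀ * u x / P - u₀ * v x / Q) ^ 2
        = ((u₀ / P) * (u x - v x) + (u₀ / P - u₀ / Q) * v x) ^ 2 := by
      intro x; field_simp; ring
    rw [integral_congr_ae (Filter.Eventually.of_forall e)]
    have hf2 : Integrable (fun x => ((u₀ / P) * (u x - v x)) ^ 2) (volume.restrict (Set.Ioo 0 L)) := by
      have e2 : (fun x => ((u₀ / P) * (u x - v x)) ^ 2)
          = fun x => (u₀ / P) ^ 2 * (u x - v x) ^ 2 := funext fun x => by ring
      rw [e2]; exact huv2.const_mul _
    have hg2 : Integrable (fun x => ((u₀ / P - u₀ / Q) * v x) ^ 2) (volume.restrict (Set.Ioo 0 L)) := by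
      have e2 : (fun x => ((u₀ / P - u₀ / Q) * v x) ^ 2)
          = fun x => (u₀ / P - u₀ / Q) ^ 2 * v x ^ 2 := funext fun x => by ring
      rw [e2]; exact hv2.const_mul _
    have t := N_add_le (fun x => (u₀ / P) * (u x - v x)) (fun x => (u₀ / P - u₀ / Q) * v x)
      (huvm.const_mul _) (hvm.const_mul _) hf2 hg2
    rw [N_smul, N_smul] at t
    have habsPQ : |Q - P| ≤ D := abs_le.mpr ⟨by linarith, by linarith⟩
    have h1 : |u₀ / P| * D ≤ D := by
      rw [abs_of_nonneg (by positivity)]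
      have : u₀ / P ≤ 1 := (div_le_one hPp).mpr (le_of_lt (not_le.mp hP))
      nlinarith
    have h2 : |u₀ / P - u₀ / Q| * Q ≤ D := by
      have hd : u₀ / P - u₀ / Q = u₀ * (Q - P) / (P * Q) := by field_simp
      rw [hd, abs_div, abs_mul, abs_of_nonneg hu₀.le, abs_of_pos (mul_pos hPp hQp)]
      have he : u₀ * |Q - P| / (P * Q) * Q = u₀ * |Q - P| / P := by
        field_simp
      rw [he]
      rw [div_le_iff₀ hPp]
      nlinarith [abs_nonneg (Q - P), (not_le.mp hP).le]
    linarith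

/-- `L¹(0,T; L²(0,L))` estimate: the distance between the saturated feedbacks
`sat₂(a·y)` and `sat₂(a·z)` is bounded by `3 a₁ √T` times the `L²(0,T; L²(0,L))`
norm of `y − z`. -/
theorem sat2_L1L2_estimate (L T u₀ a₁ : ℝ) (hL : 0 < L) (hT : 0 < T) (hu₀ : 0 < u₀)
    (a : ℝ → ℝ) (ham : Measurable a) (ha : ∀ x, 0 ≤ a x ∧ a x ≤ a₁)
    (y z : ℝ → ℝ → ℝ)
    (hym : Measurable fun p : ℝ × ℝ => y p.1 p.2)
    (hzm : Measurable fun p : ℝ × ℝ => z p.1 p.2)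
    (hyz : Integrable (fun p : ℝ × ℝ => (y p.1 p.2 - z p.1 p.2) ^ 2)
      (volume.restrict (Set.Ioo 0 T ×ˢ Set.Ioo 0 L)))
    (hy : ∀ t, Integrable (fun x => y t x ^ 2) (volume.restrict (Set.Ioo 0 L)))
    (hz : ∀ t, Integrable (fun x => z t x ^ 2) (volume.restrict (Set.Ioo 0 L))) :
    ∫ t in Set.Ioo 0 T,
        Real.sqrt (∫ x in Set.Ioo 0 L,
          (sat2 L u₀ (fun x => a x * y t x) x - sat2 L u₀ (fun x => a x * z t x) x) ^ 2) ≤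
      3 * a₁ * Real.sqrt T *
        Real.sqrt (∫ t in Set.Ioo 0 T, ∫ x in Set.Ioo 0 L, (y t x - z t x) ^ 2) := by
  
  have ha₁ : 0 ≤ a₁ := le_trans (ha 0).1 (ha 0).2
  have hyt : ∀ t, Measurable (fun x => y t x) := fun t => hym.comp measurable_prodMk_left
  have hzt : ∀ t, Measurable (fun x => z t x) := fun t => hzm.comp measurable_prodMk_left
  have hsq : ∀ x, a x ^ 2 ≤ a₁ ^ 2 := fun x => by nlinarith [(ha x).1, (ha x).2]
  have hu2 : ∀ (w : ℝ → ℝ → ℝ), (∀ t, Measurable (fun x => w t x)) →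
      (∀ t, Integrable (fun x => w t x ^ 2) (volume.restrict (Set.Ioo 0 L))) →
      ∀ t, Integrable (fun x => (a x * w t x) ^ 2) (volume.restrict (Set.Ioo 0 L)) := by
    intro w hwt hw t
    refine ((hw t).const_mul (a₁ ^ 2)).mono'
      (((ham.mul (hwt t)).pow_const 2).aestronglyMeasurable) ?_
    filter_upwards with x
    rw [Real.norm_eq_abs, abs_of_nonneg (sq_nonneg _)]
    calc (a x * w t x) ^ 2 = a x ^ 2 * w t x ^ 2 := by ring
      _ ≤ a₁ ^ 2 * w t x ^ 2 := mul_le_mul_of_nonneg_right (hsq x) (sq_nonneg _)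
  have hyz_t : ∀ t, Integrable (fun x => (y t x - z t x) ^ 2)
      (volume.restrict (Set.Ioo 0 L)) := by
    intro t
    refine (((hy t).const_mul 2).add ((hz t).const_mul 2)).mono'
      ((((hyt t).sub (hzt t)).pow_const 2).aestronglyMeasurable) ?_
    filter_upwards with x
    rw [Real.norm_eq_abs, abs_of_nonneg (sq_nonneg _)]
    simp only [Pi.add_apply]
    nlinarith [sq_nonneg (y t x + z t x)]
  -- pointwise in t bound
  have hpt : ∀ t, Real.sqrt (∫ x in Set.Ioo 0 L,
      (sat2 L u₀ (fun x => a x * y t x) x - sat2 L u₀ (fun x => a x * z t x) x) ^ 2)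
      ≤ 2 * (a₁ * Real.sqrt (∫ x in Set.Ioo 0 L, (y t x - z t x) ^ 2)) := by
    intro t
    have key := sat2_diff_le L u₀ hu₀ (fun x => a x * y t x) (fun x => a x * z t x)
      (ham.mul (hyt t)).aemeasurable (ham.mul (hzt t)).aemeasurable
      (hu2 y hyt hy t) (hu2 z hzt hz t)
    have hD : Real.sqrt (∫ x in Set.Ioo 0 L, (a x * y t x - a x * z t x) ^ 2)
        ≤ a₁ * Real.sqrt (∫ x in Set.Ioo 0 L, (y t x - z t x) ^ 2) := by
      have hb : (∫ x in Set.Ioo 0 L, (a x * y t x - a x * z t x) ^ 2)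
          ≤ ∫ x in Set.Ioo 0 L, a₁ ^ 2 * (y t x - z t x) ^ 2 := by
        refine integral_mono_of_nonneg (Filter.Eventually.of_forall fun x => sq_nonneg _)
          ((hyz_t t).const_mul _) ?_
        filter_upwards with x
        calc (a x * y t x - a x * z t x) ^ 2 = a x ^ 2 * (y t x - z t x) ^ 2 := by ring
          _ ≤ a₁ ^ 2 * (y t x - z t x) ^ 2 := mul_le_mul_of_nonneg_right (hsq x) (sq_nonneg _)
      calc Real.sqrt (∫ x in Set.Ioo 0 L, (a x * y t x - a x * z t x) ^ 2)
          ≤ Real.sqrt (∫ x in Set.Ioo 0 L, a₁ ^ 2 * (y t x - z t x) ^ 2) := Real.sqrt_le_sqrt hb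
        _ = a₁ * Real.sqrt (∫ x in Set.Ioo 0 L, (y t x - z t x) ^ 2) := by
            rw [integral_const_mul, Real.sqrt_mul (sq_nonneg _), Real.sqrt_sq_eq_abs,
              abs_of_nonneg ha₁]
    linarith
  -- integrability in time
  haveI : IsFiniteMeasure (volume.restrict (Set.Ioo 0 T)) := by
    constructor
    rw [Measure.restrict_apply_univ, Real.volume_Ioo]
    exact ENNReal.ofReal_lt_top
  have hH : Integrable (fun t => ∫ x in Set.Ioo 0 L, (y t x - z t x) ^ 2)
      (volume.restrict (Set.Ioo 0 T)) := by
    rw [Measure.volume_eq_prod, ← Measure.prod_restrict] at hyz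
    exact hyz.integral_prod_left
  have hHnn : ∀ t, 0 ≤ ∫ x in Set.Ioo 0 L, (y t x - z t x) ^ 2 :=
    fun t => integral_nonneg fun x => sq_nonneg _
  have hE2 : ∀ t, (Real.sqrt (∫ x in Set.Ioo 0 L, (y t x - z t x) ^ 2)) ^ 2
      = ∫ x in Set.Ioo 0 L, (y t x - z t x) ^ 2 := fun t => Real.sq_sqrt (hHnn t)
  have hEm : AEMeasurable (fun t => Real.sqrt (∫ x in Set.Ioo 0 L, (y t x - z t x) ^ 2))
      (volume.restrict (Set.Ioo 0 T)) :=
    Real.continuous_sqrt.measurable.comp_aemeasurable hH.aestronglyMeasurable.aemeasurable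
  have hE2int : Integrable
      (fun t => (Real.sqrt (∫ x in Set.Ioo 0 L, (y t x - z t x) ^ 2)) ^ 2)
      (volume.restrict (Set.Ioo 0 T)) :=
    hH.congr (Filter.Eventually.of_forall fun t => (hE2 t).symm)
  have hE : Integrable (fun t => Real.sqrt (∫ x in Set.Ioo 0 L, (y t x - z t x) ^ 2))
      (volume.restrict (Set.Ioo 0 T)) :=
    ((memLp_two_iff_integrable_sq hEm.aestronglyMeasurable).mpr hE2int).integrable one_le_two
  -- step A : bound by the integral of 2 a₁ E
  have stepA : (∫ t in Set.Ioo 0 T, Real.sqrt (∫ x in Set.Ioo 0 L,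
        (sat2 L u₀ (fun x => a x * y t x) x - sat2 L u₀ (fun x => a x * z t x) x) ^ 2))
      ≤ ∫ t in Set.Ioo 0 T,
        2 * (a₁ * Real.sqrt (∫ x in Set.Ioo 0 L, (y t x - z t x) ^ 2)) := by
    refine integral_mono_of_nonneg (Filter.Eventually.of_forall fun t => Real.sqrt_nonneg _)
      ((hE.const_mul a₁).const_mul 2) (Filter.Eventually.of_forall hpt)
  -- step B : Cauchy-Schwarz in time
  have cst := cs_int (fun _ : ℝ => (1:ℝ))
    (fun t => Real.sqrt (∫ x in Set.Ioo 0 L, (y t x - z t x) ^ 2))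
    aemeasurable_const hEm (by simpa using (integrable_const (1:ℝ))) hE2int
  simp only [one_mul, one_pow] at cst
  have hTe : (∫ _ in Set.Ioo 0 T, (1:ℝ)) = T := by
    simp [Real.volume_Ioo, ENNReal.toReal_ofReal hT.le, hT.le]
  rw [hTe] at cst
  have hEH : (∫ t in Set.Ioo 0 T,
        (Real.sqrt (∫ x in Set.Ioo 0 L, (y t x - z t x) ^ 2)) ^ 2)
      = ∫ t in Set.Ioo 0 T, ∫ x in Set.Ioo 0 L, (y t x - z t x) ^ 2 :=
    integral_congr_ae (Filter.Eventually.of_forall fun t => hE2 t)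
  rw [hEH] at cst
  -- combine
  have hSnn : 0 ≤ Real.sqrt (∫ t in Set.Ioo 0 T, ∫ x in Set.Ioo 0 L, (y t x - z t x) ^ 2) :=
    Real.sqrt_nonneg _
  have hTnn : 0 ≤ Real.sqrt T := Real.sqrt_nonneg _
  calc _ ≤ ∫ t in Set.Ioo 0 T,
        2 * (a₁ * Real.sqrt (∫ x in Set.Ioo 0 L, (y t x - z t x) ^ 2)) := stepA
    _ = 2 * (a₁ * ∫ t in Set.Ioo 0 T,
        Real.sqrt (∫ x in Set.Ioo 0 L, (y t x - z t x) ^ 2)) := by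
        rw [integral_const_mul, integral_const_mul]
    _ ≤ 3 * a₁ * Real.sqrt T *
        Real.sqrt (∫ t in Set.Ioo 0 T, ∫ x in Set.Ioo 0 L, (y t x - z t x) ^ 2) := by
        nlinarith [cst, mul_nonneg hTnn hSnn,
          integral_nonneg (μ := volume.restrict (Set.Ioo 0 T))
            (f := fun t => Real.sqrt (∫ x in Set.Ioo 0 L, (y t x - z t x) ^ 2))
            (fun t => Real.sqrt_nonneg (∫ x in Set.Ioo 0 L, (y t x - z t x) ^ 2))]
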